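/- Let supp(u_1) and supp(u_2) be minimal sections in 𝒮(v_1) and 𝒮(v_2) respectively (v_1, v_2 not necessarily distinct). If supp(u_1) ≠ supp(u_2), then supp(u_1) ∩ supp(u_2) = ∅; that is, two minimal sections are either equal or disjoint. -/

import Mathlib

open scoped BigOperators

set_option synthInstance.maxHeartbeats 1000000
set_option maxHeartbeats 1000000

noncomputable section

/-- Action of a word on a state: `q · u`. -/
def actW {Q A : Type*} (δ : Q → A → Q) (q : Q) (u : List A) : Q :=
  u.foldl δ q

/-- The image `Q · u` of the full state set under a word. -/
def imageSet {Q A : Type*} [Fintype Q] [DecidableEq Q] (δ : Q → A → Q) (u : List A) :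
    Finset Q :=
  Finset.image (fun q => actW δ q u) Finset.univ

/-- The rank `rk(u) = |Q · u|` of a word. -/
def wordRank {Q A : Type*} [Fintype Q] [DecidableEq Q] (δ : Q → A → Q) (u : List A) : ℕ :=
  (imageSet δ u).card

/-- A word is reset (synchronizing) if `|Q · u| = 1`. -/
def IsReset {Q A : Type*} [Fintype Q] [DecidableEq Q] (δ : Q → A → Q) (u : List A) : Prop :=
  wordRank δ u = 1

/-- The automaton is synchronizing if it admits a reset word. -/
def IsSynchronizing {Q A : Type*} [Fintype Q] [DecidableEq Q] (δ : Q → A → Q) : Prop :=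
  ∃ u : List A, IsReset δ u

/-- `Syn(𝒜)`, the set of reset words. -/
def SynWords {Q A : Type*} [Fintype Q] [DecidableEq Q] (δ : Q → A → Q) : Set (List A) :=
  {u | IsReset δ u}

/-- The hyperplane `w⊥ = {v ∈ ℂQ : ∑ q, v q = 0}`. -/
def Wperp (Q : Type*) [Fintype Q] : Submodule ℂ (Q → ℂ) :=
  LinearMap.ker (∑ q : Q, (LinearMap.proj q : (Q → ℂ) →ₗ[ℂ] ℂ))

theorem mem_Wperp {Q : Type*} [Fintype Q] (v : Q → ℂ) :
    v ∈ Wperp Q ↔ ∑ q : Q, v q = 0 := by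
  simp [Wperp, LinearMap.mem_ker, LinearMap.sum_apply]

/-- The (right) action of a word on row vectors `v ↦ v·π(u)`. -/
def piLin {Q A : Type*} [Fintype Q] [DecidableEq Q] (δ : Q → A → Q) (u : List A) :
    (Q → ℂ) →ₗ[ℂ] (Q → ℂ) where
  toFun v := fun p => ∑ q ∈ Finset.univ.filter (fun q => actW δ q u = p), v q
  map_add' := by
    intro a b; funext p; simp [Finset.sum_add_distrib]
  map_smul' := by
    intro c v; funext p; simp [Finset.mul_sum]

theorem piLin_mem {Q A : Type*} [Fintype Q] [DecidableEq Q] (δ : Q → A → Q) (u : List A) :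
    ∀ v ∈ Wperp Q, piLin δ u v ∈ Wperp Q := by
  intro v hv
  rw [mem_Wperp] at hv ⊢
  have h := Finset.sum_fiberwise (Finset.univ : Finset Q) (fun q => actW δ q u) v
  calc ∑ p : Q, piLin δ u v p
      = ∑ p : Q, ∑ q ∈ Finset.univ.filter (fun q => actW δ q u = p), v q := rfl
    _ = ∑ q : Q, v q := h
    _ = 0 := hv

/-- The endomorphism of `w⊥` induced by a word. -/
def rhoEnd {Q A : Type*} [Fintype Q] [DecidableEq Q] (δ : Q → A → Q) (u : List A) :
    Module.End ℂ (Wperp Q) :=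
  (piLin δ u).restrict (piLin_mem δ u)

/-- The representation `ρ : Σ* → End(w⊥)`; we record it in the multiplicative opposite so
that `ρ (u ++ v) = ρ u * ρ v` (the paper's right-action convention). -/
def rho {Q A : Type*} [Fintype Q] [DecidableEq Q] (δ : Q → A → Q) (u : List A) :
    (Module.End ℂ (Wperp Q))ᵐᵒᵖ :=
  MulOpposite.op (rhoEnd δ u)

/-- `ℛ`, the ℂ-subalgebra generated by `ρ(Σ*)`. -/
def Ralg {Q A : Type*} [Fintype Q] [DecidableEq Q] (δ : Q → A → Q) :
    Subalgebra ℂ (Module.End ℂ (Wperp Q))ᵐᵒᵖ :=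
  Algebra.adjoin ℂ (Set.range (rho δ))

/-- `ρ(u)` seen as an element of `ℛ`. -/
def rhoR {Q A : Type*} [Fintype Q] [DecidableEq Q] (δ : Q → A → Q) (u : List A) :
    Ralg δ :=
  ⟨rho δ u, Algebra.subset_adjoin (Set.mem_range_self u)⟩

/-- The Jacobson radical `Rad(ℛ)` of `ℛ`, realised as a subset of the ambient algebra via
the standard characterisation: `x ∈ Rad(ℛ)` iff `x ∈ ℛ` and for every `y ∈ ℛ` the element
`1 - y * x` is left-invertible in `ℛ`. -/
def RadSet {Q A : Type*} [Fintype Q] [DecidableEq Q] (δ : Q → A → Q) :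
    Set (Module.End ℂ (Wperp Q))ᵐᵒᵖ :=
  {x | x ∈ Ralg δ ∧ ∀ y ∈ Ralg δ, ∃ z ∈ Ralg δ, z * (1 - y * x) = 1}

/-- `Rad(𝒜)`: the set of radical words, i.e. words `u` with `ρ(u) ∈ Rad(ℛ)`. -/
def RadWords {Q A : Type*} [Fintype Q] [DecidableEq Q] (δ : Q → A → Q) : Set (List A) :=
  {u | rho δ u ∈ RadSet δ}

/-- The automaton is semisimple when `Rad(𝒜) = Syn(𝒜)`. -/
def IsSemisimple {Q A : Type*} [Fintype Q] [DecidableEq Q] (δ : Q → A → Q) : Prop :=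
  RadWords δ = SynWords δ

/-- The `t`-packing number `D(t,r,n)`: the maximum size of a family of `r`-subsets of an
`n`-set in which every `t`-subset is contained in at most one member. -/
def packingNumber (t r n : ℕ) : ℕ :=
  sSup {m | ∃ F : Finset (Finset (Fin n)), F.card = m ∧ (∀ S ∈ F, S.card = r) ∧
    ∀ T : Finset (Fin n), T.card = t → (F.filter fun S => T ⊆ S).card ≤ 1}

/-- The former-rank `Fr(𝒜)`: the least rank of a non-reset word. -/
def formerRank {Q A : Type*} [Fintype Q] [DecidableEq Q] (δ : Q → A → Q) : ℕ :=
  sInf {m | ∃ u : List A, ¬ IsReset δ u ∧ wordRank δ u = m}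

/-- `Fs(𝒜)`: the set of former-synchronizing words. -/
def Fs {Q A : Type*} [Fintype Q] [DecidableEq Q] (δ : Q → A → Q) : Set (List A) :=
  {u | wordRank δ u = formerRank δ}

/-- `θ_i(u)`: the image of `ρ(u)` in the `i`-th Wedderburn–Artin matrix component, where
`e : ℛ → ∏ i, M_{n_i}(ℂ)` is the quotient map `ψ` followed by the fixed isomorphism. -/
def theta {Q A : Type*} [Fintype Q] [DecidableEq Q] (δ : Q → A → Q) {k : ℕ} {nn : Fin k → ℕ}
    (e : Ralg δ →ₐ[ℂ] ∀ i : Fin k, Matrix (Fin (nn i)) (Fin (nn i)) ℂ)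
    (u : List A) (i : Fin k) : Matrix (Fin (nn i)) (Fin (nn i)) ℂ :=
  e (rhoR δ u) i

/-- `supp(v) = {i : θ_i(v) ≠ 0}`. -/
def suppW {Q A : Type*} [Fintype Q] [DecidableEq Q] (δ : Q → A → Q) {k : ℕ} {nn : Fin k → ℕ}
    (e : Ralg δ →ₐ[ℂ] ∀ i : Fin k, Matrix (Fin (nn i)) (Fin (nn i)) ℂ)
    (v : List A) : Set (Fin k) :=
  {i | theta δ e v i ≠ 0}

/-- `u ∈ Σ* v Σ*`, i.e. `v` is a factor of `u`. -/
def InFactor {A : Type*} (v u : List A) : Prop :=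
  ∃ a b : List A, u = a ++ v ++ b

/-- `u` is a `v`-minimal word: `u ∈ Σ*vΣ*`, `supp(u)` is nonempty, and `supp(u)` is minimal
among the nonempty supports of words in `Σ*vΣ*`. -/
def IsVMinimal {Q A : Type*} [Fintype Q] [DecidableEq Q] (δ : Q → A → Q) {k : ℕ}
    {nn : Fin k → ℕ}
    (e : Ralg δ →ₐ[ℂ] ∀ i : Fin k, Matrix (Fin (nn i)) (Fin (nn i)) ℂ)
    (v u : List A) : Prop :=
  InFactor v u ∧ (suppW δ e u).Nonempty ∧
    ∀ z : List A, InFactor v z → suppW δ e z ⊆ suppW δ e u →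
      suppW δ e z = ∅ ∨ suppW δ e z = suppW δ e u

/-- The `i`-th factor monoid `ℳ_i = θ_i(Σ*)`. -/
def factorMonoid {Q A : Type*} [Fintype Q] [DecidableEq Q] (δ : Q → A → Q) {k : ℕ}
    {nn : Fin k → ℕ}
    (e : Ralg δ →ₐ[ℂ] ∀ i : Fin k, Matrix (Fin (nn i)) (Fin (nn i)) ℂ)
    (i : Fin k) : Set (Matrix (Fin (nn i)) (Fin (nn i)) ℂ) :=
  Set.range fun u : List A => theta δ e u i

/-- A two-sided ideal of the (sub)monoid `M`. -/
def IsSetIdeal {X : Type*} [Mul X] (M I : Set X) : Prop :=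
  I ⊆ M ∧ ∀ a ∈ M, ∀ x ∈ I, a * x ∈ I ∧ x * a ∈ I

/-- `I` is a `0`-minimal (two-sided) ideal of the monoid `M`. -/
def IsZeroMinimalIdeal {X : Type*} [Mul X] [Zero X] (M I : Set X) : Prop :=
  IsSetIdeal M I ∧ (0 : X) ∈ I ∧ I ≠ {0} ∧
    ∀ J : Set X, IsSetIdeal M J → (0 : X) ∈ J → J ⊆ I → J ≠ {0} → J = I

/-- `Rnk_i(g) = min {rk(u) : θ_i(u) = g}`. -/
def rnkElt {Q A : Type*} [Fintype Q] [DecidableEq Q] (δ : Q → A → Q) {k : ℕ}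
    {nn : Fin k → ℕ}
    (e : Ralg δ →ₐ[ℂ] ∀ i : Fin k, Matrix (Fin (nn i)) (Fin (nn i)) ℂ)
    (i : Fin k) (g : Matrix (Fin (nn i)) (Fin (nn i)) ℂ) : ℕ :=
  sInf {m | ∃ u : List A, theta δ e u i = g ∧ wordRank δ u = m}

/-- `Rnk(ℐ_i) = min {Rnk_i(g) : g ∈ ℐ_i ∖ {0}}`. -/
def rnkIdeal {Q A : Type*} [Fintype Q] [DecidableEq Q] (δ : Q → A → Q) {k : ℕ}
    {nn : Fin k → ℕ}
    (e : Ralg δ →ₐ[ℂ] ∀ i : Fin k, Matrix (Fin (nn i)) (Fin (nn i)) ℂ)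
    (i : Fin k) (I : Set (Matrix (Fin (nn i)) (Fin (nn i)) ℂ)) : ℕ :=
  sInf {m | ∃ g ∈ I, g ≠ 0 ∧ rnkElt δ e i g = m}

/-- `w` `u`-represents `g`: `w ∈ Σ*uΣ*`, `θ_i(w) = g`, and either `g = 0` or `rk(w)` is
minimum among all words with the first two properties. -/
def URepresents {Q A : Type*} [Fintype Q] [DecidableEq Q] (δ : Q → A → Q) {k : ℕ}
    {nn : Fin k → ℕ}
    (e : Ralg δ →ₐ[ℂ] ∀ i : Fin k, Matrix (Fin (nn i)) (Fin (nn i)) ℂ)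
    (u : List A) (i : Fin k) (w : List A) (g : Matrix (Fin (nn i)) (Fin (nn i)) ℂ) : Prop :=
  InFactor u w ∧ theta δ e w i = g ∧
    (g = 0 ∨ ∀ w' : List A, InFactor u w' → theta δ e w' i = g → wordRank δ w ≤ wordRank δ w')

/-- The relation `σ_i` on `ℐ_i`. -/
def sigmaRel {Q A : Type*} [Fintype Q] [DecidableEq Q] (δ : Q → A → Q) {k : ℕ}
    {nn : Fin k → ℕ}
    (e : Ralg δ →ₐ[ℂ] ∀ i : Fin k, Matrix (Fin (nn i)) (Fin (nn i)) ℂ)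
    (i : Fin k) (u : List A)
    (g f : Matrix (Fin (nn i)) (Fin (nn i)) ℂ) : Prop :=
  g = f ∨ ∃ w₁ w₂ : List A, URepresents δ e u i w₁ g ∧ URepresents δ e u i w₂ f ∧
    1 < (imageSet δ w₁ ∩ imageSet δ w₂).card

/-- `T ⊆ [1,k]` is a core. -/
def IsCore {Q A : Type*} [Fintype Q] [DecidableEq Q] (δ : Q → A → Q) {k : ℕ}
    {nn : Fin k → ℕ}
    (e : Ralg δ →ₐ[ℂ] ∀ i : Fin k, Matrix (Fin (nn i)) (Fin (nn i)) ℂ)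
    (T : Set (Fin k)) : Prop :=
  ∀ x : List A, (∀ i ∈ T, theta δ e x i = 0) → ∀ i : Fin k, theta δ e x i = 0

/-- A minimal core. -/
def IsMinimalCore {Q A : Type*} [Fintype Q] [DecidableEq Q] (δ : Q → A → Q) {k : ℕ}
    {nn : Fin k → ℕ}
    (e : Ralg δ →ₐ[ℂ] ∀ i : Fin k, Matrix (Fin (nn i)) (Fin (nn i)) ℂ)
    (T : Set (Fin k)) : Prop :=
  IsCore δ e T ∧ ∀ T' : Set (Fin k), T' ⊆ T → IsCore δ e T' → T' = T

/-- An automaton congruence. -/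
def IsCongruence {Q A : Type*} (δ : Q → A → Q) (σ : Q → Q → Prop) : Prop :=
  Equivalence σ ∧ ∀ q p : Q, σ q p → ∀ u : List A, σ (actW δ q u) (actW δ p u)

/-- A simple automaton: the only congruences are the identity and the universal relation. -/
def IsSimple {Q A : Type*} (δ : Q → A → Q) : Prop :=
  ∀ σ : Q → Q → Prop, IsCongruence δ σ → σ = Eq ∨ σ = fun _ _ => True



section StmtEightAux

variable {Q A : Type*} [Fintype Q] [DecidableEq Q] (δ : Q → A → Q)

theorem actW_append (q : Q) (x y : List A) :
    actW δ q (x ++ y) = actW δ (actW δ q x) y := by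
  simp [actW, List.foldl_append]

theorem piLin_apply' (u : List A) (v : Q → ℂ) (p : Q) :
    piLin δ u v p = ∑ q : Q, if actW δ q u = p then v q else 0 := by
  rw [← Finset.sum_filter]; rfl

theorem piLin_append (x y : List A) (v : Q → ℂ) :
    piLin δ (x ++ y) v = piLin δ y (piLin δ x v) := by
  funext p
  rw [piLin_apply']
  rw [piLin_apply' δ y (piLin δ x v) p]
  symm
  calc (∑ r : Q, if actW δ r y = p then piLin δ x v r else 0)
      = ∑ r : Q, ∑ q : Q, if actW δ r y = p then if actW δ q x = r then v q else 0 else 0 := by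
        refine Finset.sum_congr rfl fun r _ => ?_
        rw [piLin_apply']
        split <;> simp
    _ = ∑ q : Q, ∑ r : Q, if actW δ r y = p then if actW δ q x = r then v q else 0 else 0 :=
        Finset.sum_comm
    _ = ∑ q : Q, if actW δ q (x ++ y) = p then v q else 0 := by
        refine Finset.sum_congr rfl fun q _ => ?_
        rw [Finset.sum_eq_single (actW δ q x)]
        · rw [actW_append]
          split <;> simp
        · intro r _ hr
          split
          · rw [if_neg (fun h => hr h.symm)]
          · rfl
        · simp

theorem rhoEnd_append (x y : List A) :
    rhoEnd δ (x ++ y) = rhoEnd δ y * rhoEnd δ x := by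
  refine LinearMap.ext fun v => Subtype.ext ?_
  show (piLin δ (x ++ y)) v.1 = _
  rw [piLin_append]
  rfl

theorem rho_append (x y : List A) : rho δ (x ++ y) = rho δ x * rho δ y := by
  rw [rho, rho, rho, rhoEnd_append, ← MulOpposite.op_mul]

theorem rho_nil : rho δ ([] : List A) = 1 := by
  rw [rho]
  have : rhoEnd δ ([] : List A) = 1 := by
    refine LinearMap.ext fun v => Subtype.ext ?_
    show (piLin δ ([] : List A)) v.1 = v.1
    funext p
    rw [piLin_apply']
    rw [Finset.sum_eq_single (f := fun q => if actW δ q ([] : List A) = p then (v : Q → ℂ) q else 0)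
      p (fun q _ hq => if_neg hq) (by simp)]
    exact if_pos rfl
  rw [this, MulOpposite.op_one]

theorem rhoR_append (x y : List A) : rhoR δ (x ++ y) = rhoR δ x * rhoR δ y :=
  Subtype.ext (rho_append δ x y)

theorem rhoR_nil : rhoR δ ([] : List A) = 1 :=
  Subtype.ext (rho_nil δ)

variable {k : ℕ} {nn : Fin k → ℕ}
  (e : Ralg δ →ₐ[ℂ] ∀ i : Fin k, Matrix (Fin (nn i)) (Fin (nn i)) ℂ)

theorem theta_append (x y : List A) (i : Fin k) :
    theta δ e (x ++ y) i = theta δ e x i * theta δ e y i := by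
  rw [theta, rhoR_append, map_mul]; rfl

theorem theta_nil (i : Fin k) : theta δ e ([] : List A) i = 1 := by
  rw [theta, rhoR_nil, map_one]; rfl

/-- Every value of `e` at a component lies in the span of the `θ_i` of words. -/
theorem e_apply_mem_span (i : Fin k) (r : Ralg δ) :
    e r i ∈ Submodule.span ℂ (Set.range fun u : List A => theta δ e u i) := by
  have hmul : ∀ a ∈ Submodule.span ℂ (Set.range fun u : List A => theta δ e u i),
      ∀ b ∈ Submodule.span ℂ (Set.range fun u : List A => theta δ e u i),
      a * b ∈ Submodule.span ℂ (Set.range fun u : List A => theta δ e u i) := by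
    have hTT : Submodule.span ℂ (Set.range fun u : List A => theta δ e u i) *
        Submodule.span ℂ (Set.range fun u : List A => theta δ e u i) ≤
        Submodule.span ℂ (Set.range fun u : List A => theta δ e u i) := by
      rw [Submodule.span_mul_span]
      refine Submodule.span_mono ?_
      rintro _ ⟨_, ⟨x, rfl⟩, _, ⟨y, rfl⟩, rfl⟩
      exact ⟨x ++ y, by simpa using theta_append δ e x y i⟩
    intro a ha b hb
    exact hTT (Submodule.mul_mem_mul ha hb)
  obtain ⟨r, hr⟩ := r
  induction hr using Algebra.adjoin_induction with
  | mem x h =>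
    obtain ⟨u, rfl⟩ := h
    exact Submodule.subset_span ⟨u, rfl⟩
  | algebraMap c =>
    have h1 : e ((algebraMap ℂ (Ralg δ)) c) i = c • (1 : Matrix (Fin (nn i)) (Fin (nn i)) ℂ) := by
      rw [AlgHom.commutes]
      exact congrFun (Algebra.algebraMap_eq_smul_one c) i
    show e ((algebraMap ℂ (Ralg δ)) c) i ∈ _
    rw [h1]
    exact Submodule.smul_mem _ _
      (Submodule.subset_span ⟨[], by simpa using theta_nil δ e i⟩)
  | add x y hx' hy' hx hy =>
    show e (⟨x, hx'⟩ + ⟨y, hy'⟩) i ∈ _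
    rw [map_add]
    exact Submodule.add_mem _ hx hy
  | mul x y hx' hy' hx hy =>
    show e (⟨x, hx'⟩ * ⟨y, hy'⟩) i ∈ _
    rw [map_mul]
    exact hmul _ hx _ hy

theorem span_theta_eq_top
    (he_surj : Function.Surjective e) (i : Fin k) :
    Submodule.span ℂ (Set.range fun u : List A => theta δ e u i) = ⊤ := by
  rw [Submodule.eq_top_iff']
  intro m
  obtain ⟨r, hr⟩ := he_surj (Pi.single i m)
  have h := e_apply_mem_span δ e i r
  rw [hr, Pi.single_eq_same] at h
  exact h

theorem all_of_span_top (i : Fin k)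
    (he_surj : Function.Surjective e)
    (f : Matrix (Fin (nn i)) (Fin (nn i)) ℂ →ₗ[ℂ] Matrix (Fin (nn i)) (Fin (nn i)) ℂ)
    (hf : ∀ u : List A, f (theta δ e u i) = 0) :
    ∀ m, f m = 0 := by
  intro m
  have hker : Submodule.span ℂ (Set.range fun u : List A => theta δ e u i) ≤ LinearMap.ker f := by
    rw [Submodule.span_le]
    rintro _ ⟨u, rfl⟩
    exact hf u
  rw [span_theta_eq_top δ e he_surj i] at hker
  exact hker (Submodule.mem_top : m ∈ ⊤)

theorem matrix_sandwich {n : ℕ} {X Y : Matrix (Fin n) (Fin n) ℂ} (h : ∀ b, X * b * Y = 0)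
    (hX : X ≠ 0) : Y = 0 := by
  by_contra hY
  obtain ⟨p₀, hp⟩ := Function.ne_iff.mp hX
  obtain ⟨q₀, hq⟩ := Function.ne_iff.mp hp
  obtain ⟨r₀, hr⟩ := Function.ne_iff.mp hY
  obtain ⟨s₀, hs⟩ := Function.ne_iff.mp hr
  have h2 := congrFun (congrFun (h (Matrix.single q₀ r₀ 1)) p₀) s₀
  simp only [Matrix.mul_apply, Matrix.single, Matrix.of_apply, Matrix.zero_apply,
    ite_mul, mul_ite, one_mul, mul_one, zero_mul, mul_zero, Finset.sum_ite_eq,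
    Finset.sum_ite_eq', Finset.mem_univ, if_true, ite_and] at h2
  rcases (by simpa using h2 : X p₀ q₀ = 0 ∨ Y r₀ s₀ = 0) with h3 | h3
  · exact hq (by simpa using h3)
  · exact hs (by simpa using h3)

/-- If `θ_i(u₁) ≠ 0` and `θ_i(u₂) ≠ 0` then some word `x ++ u₁ ++ y ++ u₂` has `θ_i ≠ 0`. -/
theorem exists_link (he_surj : Function.Surjective e) (i : Fin k) (u₁ u₂ : List A)
    (h1 : theta δ e u₁ i ≠ 0) (h2 : theta δ e u₂ i ≠ 0) :
    ∃ x y : List A, theta δ e (x ++ (u₁ ++ (y ++ u₂))) i ≠ 0 := by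
  by_contra hcon
  push_neg at hcon
  -- rewrite hypothesis multiplicatively
  have hmul : ∀ x y : List A,
      theta δ e x i * (theta δ e u₁ i * (theta δ e y i * theta δ e u₂ i)) = 0 := by
    intro x y
    have := hcon x y
    rwa [theta_append, theta_append, theta_append] at this
  -- step 1: for every word y, U₁ * θ(y) * U₂ = 0
  have step1 : ∀ y : List A, theta δ e u₁ i * theta δ e y i * theta δ e u₂ i = 0 := by
    intro y
    have hall := all_of_span_top δ e i he_surj
      (LinearMap.mulRight ℂ (theta δ e u₁ i * (theta δ e y i * theta δ e u₂ i)))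
      (fun x => hmul x y) 1
    rw [LinearMap.mulRight_apply, one_mul] at hall
    rw [mul_assoc]
    exact hall
  -- step 2: for every matrix b, U₁ * b * U₂ = 0
  have step2 : ∀ b, theta δ e u₁ i * b * theta δ e u₂ i = 0 := by
    have hall := all_of_span_top δ e i he_surj
      ((LinearMap.mulRight ℂ (theta δ e u₂ i)).comp (LinearMap.mulLeft ℂ (theta δ e u₁ i)))
      (fun y => by
        simp only [LinearMap.coe_comp, Function.comp_apply, LinearMap.mulLeft_apply,
          LinearMap.mulRight_apply]
        exact step1 y)
    intro b
    have := hall b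
    simpa only [LinearMap.coe_comp, Function.comp_apply, LinearMap.mulLeft_apply,
      LinearMap.mulRight_apply] using this
  exact h2 (matrix_sandwich step2 h1)

end StmtEightAux

theorem stmt8 {Q A : Type*} [Fintype Q] [DecidableEq Q] (δ : Q → A → Q)
    {k : ℕ} {nn : Fin k → ℕ}
    (e : Ralg δ →ₐ[ℂ] ∀ i : Fin k, Matrix (Fin (nn i)) (Fin (nn i)) ℂ)
    (he_surj : Function.Surjective e)
    (he_ker : ∀ x : Ralg δ, e x = 0 ↔ (x : (Module.End ℂ (Wperp Q))ᵐᵒᵖ) ∈ RadSet δ)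
    (hsync : IsSynchronizing δ)
    (v₁ v₂ u₁ u₂ : List A) (hu₁ : IsVMinimal δ e v₁ u₁) (hu₂ : IsVMinimal δ e v₂ u₂)
    (hne : suppW δ e u₁ ≠ suppW δ e u₂) :
    suppW δ e u₁ ∩ suppW δ e u₂ = ∅ := by
  rw [Set.eq_empty_iff_forall_notMem]
  rintro i ⟨hi1, hi2⟩
  have hi1' : theta δ e u₁ i ≠ 0 := hi1
  have hi2' : theta δ e u₂ i ≠ 0 := hi2
  obtain ⟨x, y, hz⟩ := exists_link δ e he_surj i u₁ u₂ hi1' hi2'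
  set z : List A := x ++ (u₁ ++ (y ++ u₂)) with hzdef
  have hsub1 : suppW δ e z ⊆ suppW δ e u₁ := by
    intro j hj
    by_contra hj1
    have hj1' : theta δ e u₁ j = 0 := not_not.mp hj1
    apply hj
    show theta δ e z j = 0
    rw [hzdef, theta_append, theta_append, hj1']
    simp
  have hsub2 : suppW δ e z ⊆ suppW δ e u₂ := by
    intro j hj
    by_contra hj2
    have hj2' : theta δ e u₂ j = 0 := not_not.mp hj2
    apply hj
    show theta δ e z j = 0
    rw [hzdef, theta_append, theta_append, theta_append, hj2']
    simp
  have hf1 : InFactor v₁ z := by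
    obtain ⟨a, b, hab⟩ := hu₁.1
    exact ⟨x ++ a, b ++ (y ++ u₂), by simp [hzdef, hab]⟩
  have hf2 : InFactor v₂ z := by
    obtain ⟨a, b, hab⟩ := hu₂.1
    exact ⟨x ++ (u₁ ++ (y ++ a)), b, by simp [hzdef, hab]⟩
  have hiz : i ∈ suppW δ e z := hz
  rcases hu₁.2.2 z hf1 hsub1 with h | h
  · rw [h] at hiz; exact hiz
  rcases hu₂.2.2 z hf2 hsub2 with h' | h'
  · rw [h'] at hiz; exact hiz
  exact hne (h ▸ h')


end
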